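/- arXiv:2308.06243 — 2 statements merged into one kernel-verified Lean document; each statement's English description precedes it below -/
import Mathlib

section
/- Unisolvence of volumetric dofs for 0-form bubbles on the tesseract: if u(x) = (1−x₁²)(1−x₂²)(1−x₃²)(1−x₄²)·w(x) where w ∈ Q^{k−2,k−2,k−2,k−2}, and ∫_{[−1,1]⁴} u·q dx = 0 for all q ∈ Q^{k−2,k−2,k−2,k−2}, then u ≡ 0. -/
open MeasureTheory

/-- A multivariate polynomial over `ℝ` vanishing on a product of an infinite
set is the zero polynomial. -/
theorem mv_eq_zero_of_eval_zero_on_infinite {s : Set ℝ} (hs : s.Infinite) :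
    ∀ {n : ℕ} (p : MvPolynomial (Fin n) ℝ),
      (∀ x : Fin n → ℝ, (∀ i, x i ∈ s) → MvPolynomial.eval x p = 0) → p = 0 := by
  intro n
  induction n with
  | zero =>
    intro p h
    apply (MvPolynomial.isEmptyRingEquiv ℝ (Fin 0)).injective
    rw [RingEquiv.map_zero]
    convert h finZeroElim (fun i => i.elim0)
    conv_rhs => rw [← (MvPolynomial.isEmptyRingEquiv ℝ (Fin 0)).symm_apply_apply p]
    simp
  | succ n ih =>
    intro p h
    apply (MvPolynomial.finSuccEquiv ℝ n).injective
    simp only [map_zero]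
    ext m : 1
    rw [Polynomial.coeff_zero]
    apply ih
    intro x hx
    have hmap : Polynomial.map (MvPolynomial.eval x) ((MvPolynomial.finSuccEquiv ℝ n) p) = 0 := by
      apply Polynomial.eq_zero_of_infinite_isRoot
      apply hs.mono
      intro y hy
      have := MvPolynomial.eval_eq_eval_mv_eval' x y p
      simp only [Set.mem_setOf_eq, Polynomial.IsRoot, ← this]
      apply h
      intro i
      refine Fin.cases ?_ ?_ i
      · simpa using hy
      · intro j; simpa using hx j
    have := congrArg (fun q => Polynomial.coeff q m) hmap
    simpa [Polynomial.coeff_map] using this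

/-- Unisolvence of volumetric dofs for 0-form bubbles on the tesseract. -/
theorem tesseract_zeroForm_bubble_unisolvent (k : ℕ) (hk : 2 ≤ k)
    (w : MvPolynomial (Fin 4) ℝ)
    (hw : w ∈ MvPolynomial.restrictDegree (Fin 4) ℝ (k - 2))
    (u : (Fin 4 → ℝ) → ℝ)
    (hu : ∀ x, u x = (∏ i : Fin 4, (1 - (x i) ^ 2)) * MvPolynomial.eval x w)
    (hvanish : ∀ q ∈ MvPolynomial.restrictDegree (Fin 4) ℝ (k - 2),
      (∫ x in Set.Icc (fun _ : Fin 4 => (-1 : ℝ)) (fun _ => 1),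
        u x * MvPolynomial.eval x q) = 0) :
    ∀ x, u x = 0 := by
  set Ic : Set (Fin 4 → ℝ) := Set.Icc (fun _ : Fin 4 => (-1 : ℝ)) (fun _ => 1) with hIc
  set f : (Fin 4 → ℝ) → ℝ :=
    fun x => (∏ i : Fin 4, (1 - (x i) ^ 2)) * (MvPolynomial.eval x w) ^ 2 with hf
  have hfu : ∀ x, u x * MvPolynomial.eval x w = f x := by
    intro x; rw [hu x, hf]; ring
  have hcf : Continuous f := by
    apply Continuous.mul
    · exact continuous_finset_prod _ fun i _ => by fun_prop
    · exact (MvPolynomial.continuous_eval w).pow 2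
  have hnn : ∀ x ∈ Ic, 0 ≤ f x := by
    intro x hx
    apply mul_nonneg _ (sq_nonneg _)
    apply Finset.prod_nonneg
    intro i _
    have h1 : (-1 : ℝ) ≤ x i := hx.1 i
    have h2 : x i ≤ 1 := hx.2 i
    nlinarith
  have hint : IntegrableOn f Ic := hcf.continuousOn.integrableOn_compact isCompact_Icc
  have hzero : (∫ x in Ic, f x) = 0 := by
    rw [show (∫ x in Ic, f x) = ∫ x in Ic, u x * MvPolynomial.eval x w from
      integral_congr_ae (Filter.Eventually.of_forall fun x => (hfu x).symm)]
    exact hvanish w hw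
  have hae : f =ᵐ[volume.restrict Ic] 0 := by
    rw [← MeasureTheory.setIntegral_eq_zero_iff_of_nonneg_ae ?_ hint]
    · exact hzero
    · filter_upwards [ae_restrict_mem measurableSet_Icc] with x hx
      exact hnn x hx
  -- w vanishes on the open cube
  have hwz : ∀ x : Fin 4 → ℝ, (∀ i, x i ∈ Set.Ioo (-1 : ℝ) 1) → MvPolynomial.eval x w = 0 := by
    intro x hx
    by_contra hne
    have hprodpos : 0 < ∏ i : Fin 4, (1 - (x i) ^ 2) := by
      apply Finset.prod_pos
      intro i _
      have h1 := (hx i).1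
      have h2 := (hx i).2
      nlinarith
    have hfx : 0 < f x := mul_pos hprodpos (by positivity)
    set U : Set (Fin 4 → ℝ) := (f ⁻¹' Set.Ioi 0) ∩ Set.pi Set.univ (fun _ => Set.Ioo (-1 : ℝ) 1)
      with hU
    have hUopen : IsOpen U := by
      apply IsOpen.inter (hcf.isOpen_preimage _ isOpen_Ioi)
      exact isOpen_set_pi Set.finite_univ fun i _ => isOpen_Ioo
    have hxU : x ∈ U := ⟨hfx, fun i _ => hx i⟩
    have hUsub : U ⊆ {y | f y ≠ 0} ∩ Ic := by
      rintro y ⟨hy1, hy2⟩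
      refine ⟨ne_of_gt hy1, ?_, ?_⟩
      · intro i; exact le_of_lt (hy2 i (Set.mem_univ i)).1
      · intro i; exact le_of_lt (hy2 i (Set.mem_univ i)).2
    have hpos : 0 < volume U := hUopen.measure_pos volume ⟨x, hxU⟩
    have hmz : volume.restrict Ic {y | f y ≠ 0} = 0 := by
      have := hae
      rw [Filter.EventuallyEq, ae_iff] at this
      simpa using this
    rw [Measure.restrict_apply₀'] at hmz
    · have : volume U = 0 := measure_mono_null hUsub hmz
      exact absurd this (ne_of_gt hpos)
    · exact measurableSet_Icc.nullMeasurableSet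
  have hw0 : w = 0 := by
    apply mv_eq_zero_of_eval_zero_on_infinite (Set.Ioo_infinite (by norm_num : (-1:ℝ) < 1))
    exact hwz
  intro x
  rw [hu x, hw0]
  simp
end

section
/- Unisolvence of volumetric dofs for 3-form bubbles on the tesseract: if G : [−1,1]⁴ → ℝ⁴ has components G_i(x) = (1−x_i²)·w_i(x), where w₁ ∈ Q^{k−2,k−1,k−1,k−1}, w₂ ∈ Q^{k−1,k−2,k−1,k−1}, w₃ ∈ Q^{k−1,k−1,k−2,k−1}, w₄ ∈ Q^{k−1,k−1,k−1,k−2}, and ∫_{[−1,1]⁴} G·q dx = 0 for all q in Q^{k−2,k−1,k−1,k−1} × Q^{k−1,k−2,k−1,k−1} × Q^{k−1,k−1,k−2,k−1} × Q^{k−1,k−1,k−1,k−2}, then G ≡ 0. -/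
open MeasureTheory

/-- Per-component variable-degree bounds for the 3-form volumetric test space:
degree `k−2` in variable `i` for component `i`, and `k−1` in the others. -/
def dBound (k : ℕ) (i j : Fin 4) : ℕ := if i = j then k - 2 else k - 1

lemma poly_zero_of_zero_on_box (p : MvPolynomial (Fin 4) ℝ)
    (h : ∀ x ∈ Set.pi Set.univ (fun _ : Fin 4 => Set.Ioo (-1 : ℝ) 1),
      MvPolynomial.eval x p = 0) :
    ∀ x, MvPolynomial.eval x p = 0 := by
  have ha : AnalyticOnNhd ℝ (fun x => MvPolynomial.eval x p) Set.univ := by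
    have := AnalyticOnNhd.eval_continuousLinearMap
      (ContinuousLinearMap.id ℝ (Fin 4 → ℝ)) p
    simpa using this
  have hU : IsOpen (Set.pi Set.univ (fun _ : Fin 4 => Set.Ioo (-1 : ℝ) 1)) :=
    isOpen_set_pi Set.finite_univ (fun _ _ => isOpen_Ioo)
  have h0 : (0 : Fin 4 → ℝ) ∈ Set.pi Set.univ (fun _ : Fin 4 => Set.Ioo (-1 : ℝ) 1) := by
    intro i _; constructor <;> norm_num
  have hev : (fun x => MvPolynomial.eval x p) =ᶠ[nhds (0 : Fin 4 → ℝ)] 0 :=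
    Filter.eventually_of_mem (hU.mem_nhds h0) h
  have := ha.eqOn_zero_of_preconnected_of_eventuallyEq_zero isPreconnected_univ
    (Set.mem_univ 0) hev
  intro x
  exact this (Set.mem_univ x)

/-- Unisolvence of volumetric dofs for 3-form bubbles on the tesseract. -/
theorem tesseract_threeForm_bubble_unisolvent (k : ℕ) (hk : 2 ≤ k)
    (w : Fin 4 → MvPolynomial (Fin 4) ℝ)
    (hw : ∀ i j, MvPolynomial.degreeOf j (w i) ≤ dBound k i j)
    (G : (Fin 4 → ℝ) → Fin 4 → ℝ)
    (hG : ∀ x i, G x i = (1 - (x i) ^ 2) * MvPolynomial.eval x (w i))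
    (hvanish : ∀ q : Fin 4 → MvPolynomial (Fin 4) ℝ,
      (∀ i j, MvPolynomial.degreeOf j (q i) ≤ dBound k i j) →
      (∫ x in Set.Icc (fun _ : Fin 4 => (-1 : ℝ)) (fun _ => 1),
        ∑ i : Fin 4, G x i * MvPolynomial.eval x (q i)) = 0) :
    ∀ x i, G x i = 0 := by
  set s : Set (Fin 4 → ℝ) := Set.Icc (fun _ : Fin 4 => (-1 : ℝ)) (fun _ => 1) with hs
  set U : Set (Fin 4 → ℝ) := Set.pi Set.univ (fun _ : Fin 4 => Set.Ioo (-1 : ℝ) 1) with hUdef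
  set f : (Fin 4 → ℝ) → ℝ :=
    fun x => ∑ i : Fin 4, (1 - (x i) ^ 2) * (MvPolynomial.eval x (w i)) ^ 2 with hf
  have hfc : Continuous f := by
    apply continuous_finset_sum
    intro i _
    exact ((continuous_const.sub ((continuous_apply i).pow 2)).mul
      ((MvPolynomial.continuous_eval (w i)).pow 2))
  have hfeq : ∀ x, (∑ i : Fin 4, G x i * MvPolynomial.eval x (w i)) = f x := by
    intro x
    apply Finset.sum_congr rfl
    intro i _
    rw [hG x i]; ring
  have hint : (∫ x in s, f x) = 0 := by
    rw [← hvanish w hw]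
    exact setIntegral_congr_fun measurableSet_Icc (fun x _ => (hfeq x).symm)
  have hUs : U ⊆ s := by
    intro x hx
    constructor <;> intro i
    · exact le_of_lt (hx i (Set.mem_univ i)).1
    · exact le_of_lt (hx i (Set.mem_univ i)).2
  have hnonneg : ∀ x ∈ s, 0 ≤ f x := by
    intro x hx
    apply Finset.sum_nonneg
    intro i _
    apply mul_nonneg _ (sq_nonneg _)
    have h1 : -1 ≤ x i := hx.1 i
    have h2 : x i ≤ 1 := hx.2 i
    nlinarith
  have hIcc : IsCompact s := isCompact_Icc
  have hintg : IntegrableOn f s := hfc.continuousOn.integrableOn_compact hIcc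
  have hae : f =ᵐ[volume.restrict s] 0 := by
    rw [← MeasureTheory.setIntegral_eq_zero_iff_of_nonneg_ae ?_ hintg]
    · exact hint
    · rw [Filter.EventuallyLE, ae_restrict_iff' measurableSet_Icc]
      exact Filter.Eventually.of_forall hnonneg
  -- f = 0 on U
  have hfU : ∀ x ∈ U, f x = 0 := by
    by_contra hcon
    push_neg at hcon
    obtain ⟨x0, hx0U, hx0⟩ := hcon
    have hfx0 : 0 < f x0 := lt_of_le_of_ne (hnonneg x0 (hUs hx0U)) (Ne.symm hx0)
    set V : Set (Fin 4 → ℝ) := U ∩ f ⁻¹' Set.Ioi (f x0 / 2) with hV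
    have hVopen : IsOpen V :=
      (isOpen_set_pi Set.finite_univ (fun _ _ => isOpen_Ioo)).inter
        (isOpen_Ioi.preimage hfc)
    have hx0V : x0 ∈ V := ⟨hx0U, by simp; linarith⟩
    have hVpos : 0 < volume V := hVopen.measure_pos volume ⟨x0, hx0V⟩
    have hzero : volume ({x | f x ≠ 0} ∩ s) = 0 := by
      have h1 : volume.restrict s {x | f x ≠ 0} = 0 := by
        have h2 := ae_iff.mp hae
        simpa using h2
      have hsm : MeasurableSet s := by rw [hs]; exact measurableSet_Icc
      exact (Measure.restrict_apply' hsm).symm.trans h1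
    have hVsub : V ⊆ {x | f x ≠ 0} ∩ s := by
      intro x hx
      refine ⟨?_, hUs hx.1⟩
      have : f x0 / 2 < f x := hx.2
      intro h; rw [h] at this; linarith
    have := measure_mono (μ := (volume : Measure (Fin 4 → ℝ))) hVsub
    rw [hzero] at this
    exact absurd (le_antisymm this zero_le) (ne_of_gt hVpos)
  -- each w i evaluates to zero on U
  have hwU : ∀ i, ∀ x ∈ U, MvPolynomial.eval x (w i) = 0 := by
    intro i x hx
    have hterm : (1 - (x i) ^ 2) * (MvPolynomial.eval x (w i)) ^ 2 = 0 := by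
      have hsum := hfU x hx
      have hnn : ∀ j ∈ Finset.univ, (0:ℝ) ≤ (1 - (x j) ^ 2) * (MvPolynomial.eval x (w j)) ^ 2 := by
        intro j _
        apply mul_nonneg _ (sq_nonneg _)
        have h1 : -1 < x j := (hx j (Set.mem_univ j)).1
        have h2 : x j < 1 := (hx j (Set.mem_univ j)).2
        nlinarith
      exact (Finset.sum_eq_zero_iff_of_nonneg hnn).mp hsum i (Finset.mem_univ i)
    have h1 : -1 < x i := (hx i (Set.mem_univ i)).1
    have h2 : x i < 1 := (hx i (Set.mem_univ i)).2
    have hpos : 0 < 1 - (x i) ^ 2 := by nlinarith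
    have := mul_eq_zero.mp hterm
    rcases this with h | h
    · linarith
    · exact pow_eq_zero_iff (by norm_num) |>.mp h
  intro x i
  rw [hG x i, poly_zero_of_zero_on_box (w i) (hwU i) x, mul_zero]
end
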